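/- For all s ∈ ℝ one has g_ε(β′(s), ε⁻¹J₁β(s)) = −ε⟨β′(s), J₁β(s)⟩ = −ελ√(λ+ν²)/√(λB), the Berger metric being taken at β(s), and √(|g_ε(β′(s), β′(s))|) = ε/√(λB). Consequently the angle function g_ε(β′(s), ε⁻¹J₁β(s)) / √(|g_ε(β′(s), β′(s))|) equals the constant −λ√(λ+ν²), independent of s; that is, β is a general helix in the Lorentzian Berger sphere with axis the unit Hopf vector field E₁ = ε⁻¹J₁p. -/

import Mathlib

open Matrix Real

noncomputable def J1 : Matrix (Fin 4) (Fin 4) ℝ :=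
  !![0,-1,0,0; 1,0,0,0; 0,0,0,-1; 0,0,1,0]

/-- along the curve `β`, with the Berger metric taken at `β(s)`,
one has `g_ε(β′, ε⁻¹J₁β) = −ε⟨β′, J₁β⟩ = −ελ√(λ+ν²)/√(λB)` and
`√|g_ε(β′,β′)| = ε/√(λB)`, so the angle function
`g_ε(β′, ε⁻¹J₁β)/√|g_ε(β′,β′)|` is the constant `−λ√(λ+ν²)`: `β` is a general
helix with axis the unit Hopf vector field `E₁ = ε⁻¹J₁p`. -/
theorem stmt17 (ε lam ν B d : ℝ) (hε : 0 < ε)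
    (hcase : (lam = -1 ∧ 1 < ν ^ 2) ∨ (lam = 1 ∧ ν ≠ 0))
    (hB : B = 1 + lam * ν ^ 2 * (1 + ε ^ 2))
    (hd : d = (Real.sqrt (lam * B) - ε * |ν|) / Real.sqrt (lam + ν ^ 2))
    (β : ℝ → Fin 4 → ℝ)
    (hβ : ∀ s, β s = (1 / Real.sqrt (1 + d ^ 2)) •
      ![d * cos (s / d), lam * d * sin (s / d), cos (d * s), lam * sin (d * s)]) :
    ∀ s : ℝ,
      (deriv β s ⬝ᵥ (ε⁻¹ • (J1 *ᵥ β s))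
          - (1 + ε ^ 2) * (deriv β s ⬝ᵥ (J1 *ᵥ β s))
            * ((ε⁻¹ • (J1 *ᵥ β s)) ⬝ᵥ (J1 *ᵥ β s))
        = -ε * (deriv β s ⬝ᵥ (J1 *ᵥ β s))) ∧
      (-ε * (deriv β s ⬝ᵥ (J1 *ᵥ β s))
        = -ε * lam * Real.sqrt (lam + ν ^ 2) / Real.sqrt (lam * B)) ∧
      (Real.sqrt |deriv β s ⬝ᵥ deriv β s
          - (1 + ε ^ 2) * (deriv β s ⬝ᵥ (J1 *ᵥ β s)) ^ 2|
        = ε / Real.sqrt (lam * B)) ∧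
      ((deriv β s ⬝ᵥ (ε⁻¹ • (J1 *ᵥ β s))
          - (1 + ε ^ 2) * (deriv β s ⬝ᵥ (J1 *ᵥ β s))
            * ((ε⁻¹ • (J1 *ᵥ β s)) ⬝ᵥ (J1 *ᵥ β s)))
        / Real.sqrt |deriv β s ⬝ᵥ deriv β s
          - (1 + ε ^ 2) * (deriv β s ⬝ᵥ (J1 *ᵥ β s)) ^ 2|
        = -lam * Real.sqrt (lam + ν ^ 2)) := by
  have hlam2 : lam ^ 2 = 1 := by rcases hcase with ⟨h,_⟩|⟨h,_⟩ <;> simp [h]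
  have hkpos2 : 0 < lam + ν ^ 2 := by
    rcases hcase with ⟨h,h2⟩|⟨h,h2⟩
    · rw [h]; linarith
    · rw [h]; nlinarith [sq_nonneg ν]
  have hAB : lam * B = lam + ν ^ 2 * (1 + ε ^ 2) := by
    rw [hB]; linear_combination ν ^ 2 * (1 + ε ^ 2) * hlam2
  have hABpos : 0 < lam * B := by nlinarith [sq_nonneg (ε * ν)]
  set k := Real.sqrt (lam + ν ^ 2) with hkdef
  set A := Real.sqrt (lam * B) with hAdef
  have hk : k ^ 2 = lam + ν ^ 2 := Real.sq_sqrt hkpos2.le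
  have hA : A ^ 2 = lam * B := Real.sq_sqrt hABpos.le
  have hkpos : 0 < k := Real.sqrt_pos.mpr hkpos2
  have hApos : 0 < A := Real.sqrt_pos.mpr hABpos
  have hAm : ε * |ν| < A := by
    nlinarith [sq_abs ν, abs_nonneg ν, mul_nonneg hε.le (abs_nonneg ν),
      Real.sqrt_nonneg (lam * B), hA, hAB, hkpos2]
  have hdk : d * k = A - ε * |ν| := by rw [hd]; field_simp
  have hdpos : 0 < d := by rw [hd]; exact div_pos (by linarith) hkpos
  have hdne : d ≠ 0 := hdpos.ne'
  have hkey : (1 + d ^ 2) * k = 2 * A * d := by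
    have h2 : ((1 + d ^ 2) * k) * k = (2 * A * d) * k := by
      nlinarith [hdk, hk, hA, hAB, sq_abs ν]
    exact mul_right_cancel₀ hkpos.ne' h2
  set c := (1 : ℝ) / Real.sqrt (1 + d ^ 2) with hcdef
  have h1d : (0:ℝ) < 1 + d ^ 2 := by positivity
  have hc2 : c ^ 2 * (1 + d ^ 2) = 1 := by
    rw [hcdef, div_pow, one_pow, Real.sq_sqrt h1d.le]
    field_simp
  intro s
  have hεne : ε ≠ 0 := hε.ne'
  -- derivative of β
  have hder : HasDerivAt β
      (c • ![-sin (s/d), lam * cos (s/d), -(d * sin (d*s)), lam * (d * cos (d*s))]) s := by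
    have hβeq : β = fun t => c • ![d * cos (t / d), lam * d * sin (t / d),
        cos (d * t), lam * sin (d * t)] := funext hβ
    rw [hβeq]
    refine hasDerivAt_pi.mpr fun i => ?_
    fin_cases i
    · show HasDerivAt (fun t => c * (d * Real.cos (t/d))) (c * (-Real.sin (s/d))) s
      have h := (((hasDerivAt_id s).div_const d).cos).const_mul (c * d)
      have hf : (fun t => c * (d * Real.cos (t/d))) = fun t => (c*d) * Real.cos (t/d) := by
        funext t; ring
      rw [hf]; refine h.congr_deriv ?_; simp only [id_eq]; field_simp
    · show HasDerivAt (fun t => c * (lam * d * Real.sin (t/d))) (c * (lam * Real.cos (s/d))) s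
      have h := (((hasDerivAt_id s).div_const d).sin).const_mul (c * (lam * d))
      have hf : (fun t => c * (lam * d * Real.sin (t/d)))
          = fun t => (c*(lam*d)) * Real.sin (t/d) := by funext t; ring
      rw [hf]; refine h.congr_deriv ?_; simp only [id_eq]; field_simp
    · show HasDerivAt (fun t => c * Real.cos (d*t)) (c * (-(d * Real.sin (d*s)))) s
      have h := ((HasDerivAt.const_mul d (hasDerivAt_id s)).cos).const_mul c
      refine h.congr_deriv ?_
      simp only [id_eq, mul_one]; ring
    · show HasDerivAt (fun t => c * (lam * Real.sin (d*t))) (c * (lam * (d * Real.cos (d*s)))) s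
      have h := ((HasDerivAt.const_mul d (hasDerivAt_id s)).sin).const_mul (c * lam)
      have hf : (fun t => c * (lam * Real.sin (d*t)))
          = fun t => (c*lam) * Real.sin (d*t) := by funext t; ring
      rw [hf]; refine h.congr_deriv ?_; simp only [id_eq, mul_one]; ring
  have hderiv : deriv β s = c • ![-sin (s/d), lam * cos (s/d),
      -(d * sin (d*s)), lam * (d * cos (d*s))] := hder.deriv
  have htrig1 := sin_sq_add_cos_sq (s/d)
  have htrig2 := sin_sq_add_cos_sq (d*s)
  -- the three Euclidean dot products
  have hP : deriv β s ⬝ᵥ (J1 *ᵥ β s) = lam * k / A := by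
    have hP2 : deriv β s ⬝ᵥ (J1 *ᵥ β s) = 2 * lam * d * c ^ 2 := by
      rw [hderiv, hβ s]
      simp [J1, Matrix.mulVec, dotProduct, Fin.sum_univ_four, Matrix.vecHead,
        Matrix.vecTail]
      linear_combination (lam * d * c ^ 2) * htrig1 + (lam * d * c ^ 2) * htrig2
    rw [hP2, eq_div_iff hApos.ne']
    have h6 : c ^ 2 = 1 / (1 + d ^ 2) := by
      rw [eq_div_iff h1d.ne']; exact hc2
    rw [h6]
    have h8 : 2 * lam * d * (1 / (1 + d ^ 2)) * A = (2 * lam * d * A) / (1 + d ^ 2) := by ring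
    rw [h8, div_eq_iff h1d.ne']
    linear_combination (-lam) * hkey
  have hQ : deriv β s ⬝ᵥ deriv β s = 1 := by
    rw [hderiv]
    simp [dotProduct, Fin.sum_univ_four, Matrix.vecHead, Matrix.vecTail]
    linear_combination (c ^ 2 * cos (s/d) ^ 2 + c ^ 2 * d ^ 2 * cos (d*s) ^ 2) * hlam2
      + c ^ 2 * htrig1 + c ^ 2 * d ^ 2 * htrig2 + hc2
  have hR : (J1 *ᵥ β s) ⬝ᵥ (J1 *ᵥ β s) = 1 := by
    rw [hβ s]
    simp [J1, Matrix.mulVec, dotProduct, Fin.sum_univ_four, Matrix.vecHead,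
      Matrix.vecTail]
    linear_combination (c ^ 2 * d ^ 2 * sin (s/d) ^ 2 + c ^ 2 * sin (d*s) ^ 2) * hlam2
      + c ^ 2 * d ^ 2 * htrig1 + c ^ 2 * htrig2 + hc2
  have hsmul1 : deriv β s ⬝ᵥ (ε⁻¹ • (J1 *ᵥ β s)) = ε⁻¹ * (deriv β s ⬝ᵥ (J1 *ᵥ β s)) := by
    simp [dotProduct_smul, smul_eq_mul]
  have hsmul2 : (ε⁻¹ • (J1 *ᵥ β s)) ⬝ᵥ (J1 *ᵥ β s)
      = ε⁻¹ * ((J1 *ᵥ β s) ⬝ᵥ (J1 *ᵥ β s)) := by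
    simp [smul_dotProduct, smul_eq_mul]
  have hmain : deriv β s ⬝ᵥ (ε⁻¹ • (J1 *ᵥ β s))
      - (1 + ε ^ 2) * (deriv β s ⬝ᵥ (J1 *ᵥ β s)) * ((ε⁻¹ • (J1 *ᵥ β s)) ⬝ᵥ (J1 *ᵥ β s))
      = -ε * (deriv β s ⬝ᵥ (J1 *ᵥ β s)) := by
    rw [hsmul1, hsmul2, hR, mul_one]
    field_simp
    ring
  have e2 : A ^ 2 - (1 + ε ^ 2) * lam ^ 2 * k ^ 2 = -(lam * ε ^ 2) := by
    linear_combination hA + hAB - (1 + ε ^ 2) * k ^ 2 * hlam2 - (1 + ε ^ 2) * hk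
  have hnorm : deriv β s ⬝ᵥ deriv β s - (1 + ε ^ 2) * (deriv β s ⬝ᵥ (J1 *ᵥ β s)) ^ 2
      = -(lam * ε ^ 2) / A ^ 2 := by
    rw [hQ, hP, ← e2]
    field_simp
  have habs : |(-(lam * ε ^ 2) / A ^ 2)| = (ε / A) ^ 2 := by
    rcases hcase with ⟨h,_⟩|⟨h,_⟩ <;> rw [h]
    · have h7 : -((-1:ℝ) * ε ^ 2) / A ^ 2 = (ε / A) ^ 2 := by rw [div_pow]; ring
      rw [h7]; exact abs_of_pos (by positivity)
    · have h7 : -((1:ℝ) * ε ^ 2) / A ^ 2 = -((ε / A) ^ 2) := by rw [div_pow]; ring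
      rw [h7, abs_neg]; exact abs_of_nonneg (sq_nonneg _)
  have h3 : Real.sqrt |deriv β s ⬝ᵥ deriv β s
      - (1 + ε ^ 2) * (deriv β s ⬝ᵥ (J1 *ᵥ β s)) ^ 2| = ε / A := by
    rw [hnorm, habs, Real.sqrt_sq (by positivity)]
  refine ⟨hmain, by rw [hP]; ring, h3, ?_⟩
  rw [hmain, h3, hP]
  field_simp
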